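/- Let G be an n-vertex circle graph (n ≥ 1) with an isolated vertex u, let A, B ⊆ V(G) \ {u} be disjoint sets, and let F be the set of edges of G with one endpoint in A and the other in B. Then for any graph H on the same vertex set as G in which u is isolated, cz(H, H △ F) ≤ 2n - 2. -/

import Mathlib

variable {V : Type*}

open Classical in
/-- Local complementation at `v`: complement the induced subgraph on `N_G(v)`. -/
noncomputable def localComp (G : SimpleGraph V) (v : V) : SimpleGraph V where
  Adj x y := x ≠ y ∧ (if G.Adj v x ∧ G.Adj v y then ¬ G.Adj x y else G.Adj x y)
  symm := ⟨by
    intro x y ⟨hxy, h⟩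
    refine ⟨hxy.symm, ?_⟩
    by_cases hc : G.Adj v x ∧ G.Adj v y
    · rw [if_pos hc] at h
      rw [if_pos ⟨hc.2, hc.1⟩]
      exact fun h' => h h'.symm
    · rw [if_neg hc] at h
      rw [if_neg (fun h' => hc ⟨h'.2, h'.1⟩)]
      exact h.symm⟩
  loopless := ⟨fun x hx => hx.1 rfl⟩

/-- Toggle (add or remove) the edge `uv`. -/
def toggle (G : SimpleGraph V) (u v : V) : SimpleGraph V where
  Adj x y := x ≠ y ∧ Xor' (G.Adj x y) ((x = u ∧ y = v) ∨ (x = v ∧ y = u))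
  symm := ⟨by
    intro x y ⟨hxy, h⟩
    refine ⟨hxy.symm, ?_⟩
    rw [G.adj_comm y x]
    unfold Xor' at *
    rw [show ((y = u ∧ x = v) ∨ (y = v ∧ x = u)) ↔ ((x = u ∧ y = v) ∨ (x = v ∧ y = u)) by tauto]
    exact h⟩
  loopless := ⟨fun x hx => hx.1 rfl⟩

/-- Local equivalence: related by a sequence of local complementations. -/
def LocallyEquiv (G H : SimpleGraph V) : Prop :=
  Relation.ReflTransGen (fun A B => ∃ v, B = localComp A v) G H

/-- `CZle G H k` : there is a sequence `G = G₀, G₀', G₁, G₁', …, G_k, G_k' = H`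
with each `Gᵢ'` locally equivalent to `Gᵢ` and each `Gᵢ` (i ≥ 1) obtained from
`G_{i-1}'` by adding or removing a single edge. -/
inductive CZle : SimpleGraph V → SimpleGraph V → ℕ → Prop
  | base {G H : SimpleGraph V} : LocallyEquiv G H → CZle G H 0
  | step {G G' F H : SimpleGraph V} {k : ℕ} (u v : V) :
      LocallyEquiv G G' → u ≠ v → F = toggle G' u v → CZle F H k → CZle G H (k + 1)

/-- The CZ-distance between two graphs on the same vertex set. -/
noncomputable def czDist (G H : SimpleGraph V) : ℕ := sInf {k | CZle G H k}

/-- The CZ-distance of a graph: CZ-distance to the edgeless graph. -/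
noncomputable def cz (G : SimpleGraph V) : ℕ := czDist G ⊥

open Classical in
/-- Complementing on a vertex set `X`: replace the induced subgraph on `X` by its complement. -/
noncomputable def complOn (G : SimpleGraph V) (X : Set V) : SimpleGraph V :=
  SimpleGraph.fromRel (fun x y => if x ∈ X ∧ y ∈ X then ¬ G.Adj x y else G.Adj x y)

open Classical in
/-- The adjacency matrix over GF(2). -/
noncomputable def adjMat (G : SimpleGraph V) : Matrix V V (ZMod 2) :=
  fun x y => if G.Adj x y then 1 else 0

/-- `H` is a rank-`p` perturbation of `G`. -/
def IsRankPerturbation [Fintype V] (p : ℕ) (G H : SimpleGraph V) : Prop :=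
  ∃ M : Matrix V V (ZMod 2), M.IsSymm ∧ M.rank ≤ p ∧
    ∀ x y : V, x ≠ y → adjMat H x y = adjMat G x y + M x y

/-- `G` is a circle graph: the overlap graph of a family of closed intervals in `ℝ`
with pairwise distinct endpoints. -/
def IsCircleGraph (G : SimpleGraph V) : Prop :=
  ∃ l r : V → ℝ, (∀ v, l v < r v) ∧
    Function.Injective (fun p : V × Bool => if p.2 then r p.1 else l p.1) ∧
    ∀ x y, G.Adj x y ↔
      ((l x < l y ∧ l y < r x ∧ r x < r y) ∨ (l y < l x ∧ l x < r y ∧ r y < r x))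

/-- Two vertex sets are homogeneous: complete or anticomplete to each other. -/
def Homog (G : SimpleGraph V) (X Y : Finset V) : Prop :=
  (∀ x ∈ X, ∀ y ∈ Y, G.Adj x y) ∨ (∀ x ∈ X, ∀ y ∈ Y, ¬ G.Adj x y)

/-- Every part of the partition `P` has red degree (number of other parts it is
inhomogeneous to) at most `k`. -/
def RedDegLE [Fintype V] [DecidableEq V] (G : SimpleGraph V) (P : Finpartition (Finset.univ : Finset V))
    (k : ℕ) : Prop :=
  ∀ X ∈ P.parts, {Y : Finset V | Y ∈ P.parts ∧ Y ≠ X ∧ ¬ Homog G X Y}.ncard ≤ k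

/-- One contraction: merge two parts of the partition. -/
def MergeStep [Fintype V] [DecidableEq V]
    (P Q : Finpartition (Finset.univ : Finset V)) : Prop :=
  ∃ A B, A ∈ P.parts ∧ B ∈ P.parts ∧ A ≠ B ∧
    Q.parts = insert (A ∪ B) ((P.parts.erase A).erase B)

/-- `G` has twin-width at most `k`: there is a contraction (partition) sequence from
the discrete partition to the trivial one in which every partition has red degree at
most `k`. -/
def TwinWidthLE [Fintype V] [DecidableEq V] (G : SimpleGraph V) (k : ℕ) : Prop :=
  ∃ (m : ℕ) (seq : Fin (m + 1) → Finpartition (Finset.univ : Finset V)),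
    (∀ X ∈ (seq 0).parts, X.card = 1) ∧
    (seq (Fin.last m)).parts.card ≤ 1 ∧
    (∀ i : Fin m, MergeStep (seq i.castSucc) (seq i.succ)) ∧
    (∀ i, RedDegLE G (seq i) k)

/-- `H` is obtained from `G` (in which `u` is isolated) by adding all edges between `u`
and `N_G(v)`, possibly adding the edge `uv`, and then adding at most `k` additional
edges incident to `u`. -/
def ExtendStep (k : ℕ) (G H : SimpleGraph V) (u v : V) : Prop :=
  u ≠ v ∧ G.neighborSet u = ∅ ∧
  (∀ x y, x ≠ u → y ≠ u → (H.Adj x y ↔ G.Adj x y)) ∧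
  G.neighborSet v ⊆ H.neighborSet u ∧
  ∃ T : Finset V, T.card ≤ k ∧ H.neighborSet u ⊆ G.neighborSet v ∪ {v} ∪ ↑T

section AuxCZ

lemma czle_locEquiv_left {G G' H : SimpleGraph V} {k : ℕ}
    (h : LocallyEquiv G G') (h2 : CZle G' H k) : CZle G H k := by
  cases h2 with
  | base h3 => exact .base (h.trans h3)
  | step a b h1 hne hF h4 => exact .step a b (h.trans h1) hne hF h4

lemma locallyEquiv_localComp (G : SimpleGraph V) (v : V) :
    LocallyEquiv G (localComp G v) :=
  Relation.ReflTransGen.single ⟨v, rfl⟩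

lemma czle_toggle {G H : SimpleGraph V} {k : ℕ} {u v : V} (hne : u ≠ v)
    (h : CZle (toggle G u v) H k) : CZle G H (k + 1) :=
  .step u v .refl hne rfl h

/-- Toggle all edges between `u` and the members of `D`. -/
def toggleSet (u : V) (D : Finset V) (P : SimpleGraph V) : SimpleGraph V where
  Adj x y := x ≠ y ∧ Xor' (P.Adj x y) ((x = u ∧ y ∈ D) ∨ (y = u ∧ x ∈ D))
  symm := ⟨by
    intro x y ⟨hxy, h⟩
    refine ⟨hxy.symm, ?_⟩
    rw [P.adj_comm y x]
    unfold Xor' Xor at h ⊢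
    tauto⟩
  loopless := ⟨fun x hx => hx.1 rfl⟩

lemma xor_aux (p e d : Prop) (hed : ¬ (e ∧ d)) :
    Xor' p (e ∨ d) ↔ Xor' (Xor' p e) d := by
  unfold Xor' Xor
  tauto

lemma toggleSet_empty (u : V) (P : SimpleGraph V) : toggleSet u ∅ P = P := by
  ext x y
  constructor
  · rintro ⟨h1, (⟨hp, _⟩ | ⟨hf, _⟩)⟩
    · exact hp
    · rcases hf with ⟨_, f⟩ | ⟨_, f⟩ <;> exact (Finset.notMem_empty _ f).elim
  · intro h
    exact ⟨h.ne, Or.inl ⟨h, by rintro (⟨_, f⟩ | ⟨_, f⟩) <;> exact Finset.notMem_empty _ f⟩⟩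

lemma toggleSet_insert [DecidableEq V] (u a : V) (D : Finset V) (ha : a ∉ D) (hua : u ≠ a)
    (P : SimpleGraph V) :
    toggleSet u (insert a D) P = toggleSet u D (toggle P u a) := by
  ext x y
  show (x ≠ y ∧ _) ↔ (x ≠ y ∧ _)
  refine and_congr_right fun hxy => ?_
  have hw : (x ≠ y ∧ Xor' (P.Adj x y) ((x = u ∧ y = a) ∨ (x = a ∧ y = u))) ↔
      Xor' (P.Adj x y) ((x = u ∧ y = a) ∨ (x = a ∧ y = u)) := and_iff_right hxy
  show Xor' (P.Adj x y) ((x = u ∧ y ∈ insert a D) ∨ (y = u ∧ x ∈ insert a D)) ↔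
      Xor' ((toggle P u a).Adj x y) ((x = u ∧ y ∈ D) ∨ (y = u ∧ x ∈ D))
  have hadj : (toggle P u a).Adj x y ↔
      Xor' (P.Adj x y) ((x = u ∧ y = a) ∨ (x = a ∧ y = u)) := by
    constructor
    · rintro ⟨_, h⟩; exact h
    · intro h; exact ⟨hxy, h⟩
  rw [hadj]
  have hedc : ¬ (((x = u ∧ y = a) ∨ (x = a ∧ y = u)) ∧ ((x = u ∧ y ∈ D) ∨ (y = u ∧ x ∈ D))) := by
    rintro ⟨h1, h2⟩
    rcases h1 with ⟨hxu, hya⟩ | ⟨hxa, hyu⟩ <;> rcases h2 with ⟨hxu', hyD⟩ | ⟨hyu', hxD⟩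
    · exact ha (hya ▸ hyD)
    · exact hua (hyu'.symm.trans hya)
    · exact hua (hxu'.symm.trans hxa)
    · exact ha (hxa ▸ hxD)
  have hC : ((x = u ∧ y ∈ insert a D) ∨ (y = u ∧ x ∈ insert a D)) ↔
      (((x = u ∧ y = a) ∨ (x = a ∧ y = u)) ∨ ((x = u ∧ y ∈ D) ∨ (y = u ∧ x ∈ D))) := by
    simp only [Finset.mem_insert]
    tauto
  rw [hC]
  exact xor_aux _ _ _ hedc

lemma czle_toggleSet {H : SimpleGraph V} (u : V) (D : Finset V) :
    ∀ (P : SimpleGraph V) {k : ℕ}, u ∉ D → CZle (toggleSet u D P) H k →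
      CZle P H (k + D.card) := by
  classical
  induction D using Finset.induction_on with
  | empty => intro P k _ h; simpa [toggleSet_empty] using h
  | insert a D ha ih =>
    intro P k hu h
    have hua : u ≠ a := by rintro rfl; exact hu (Finset.mem_insert_self _ _)
    have huD : u ∉ D := fun hD => hu (Finset.mem_insert_of_mem hD)
    rw [toggleSet_insert u a D ha hua] at h
    have h2 := czle_toggle hua (ih (toggle P u a) huD h)
    rw [Finset.card_insert_of_notMem ha, ← Nat.add_assoc]
    exact h2

end AuxCZ

section AuxSweep

/-- The intermediate graph after `i` sweep events. -/
def sweepG (H : SimpleGraph V) (u : V) (s t : V → ℕ) (i : ℕ) : SimpleGraph V where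
  Adj x y := x ≠ y ∧ ((x = u ∧ y ≠ u ∧ s y ≤ i ∧ i < t y) ∨ (y = u ∧ x ≠ u ∧ s x ≤ i ∧ i < t x) ∨
    (x ≠ u ∧ y ≠ u ∧ Xor' (H.Adj x y)
      (Odd ((Finset.Ico (s x) (t x) ∩ Finset.Ico (s y) (t y) ∩ Finset.range i).card))))
  symm := ⟨by
    intro x y ⟨hxy, h⟩
    refine ⟨hxy.symm, ?_⟩
    rcases h with h | h | ⟨h1, h2, h3⟩
    · exact Or.inr (Or.inl h)
    · exact Or.inl h
    · refine Or.inr (Or.inr ⟨h2, h1, ?_⟩)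
      rw [Finset.inter_comm (Finset.Ico (s y) (t y)) (Finset.Ico (s x) (t x)), H.adj_comm y x]
      exact h3⟩
  loopless := ⟨fun x hx => hx.1 rfl⟩

/-- The set of vertices whose activity status changes at event `i`. -/
def dSet [Fintype V] (s t : V → ℕ) (i : ℕ) : Finset V :=
  Finset.univ.filter (fun v => ¬((s v ≤ i ∧ i < t v) ↔ (s v ≤ i + 1 ∧ i + 1 < t v)))

lemma mem_dSet [Fintype V] (s t : V → ℕ) (i : ℕ) (v : V) :
    v ∈ dSet s t i ↔ ¬((s v ≤ i ∧ i < t v) ↔ (s v ≤ i + 1 ∧ i + 1 < t v)) := by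
  simp [dSet]

lemma u_not_mem_dSet [Fintype V] (s t : V → ℕ) (u : V) (htu : t u = 0) (i : ℕ) :
    u ∉ dSet s t i := by
  simp [dSet, htu]

lemma card_inter_range_succ (X Y : Finset ℕ) (i : ℕ) :
    (X ∩ Y ∩ Finset.range (i + 1)).card
      = (X ∩ Y ∩ Finset.range i).card + (if i ∈ X ∧ i ∈ Y then 1 else 0) := by
  classical
  by_cases h : i ∈ X ∧ i ∈ Y
  · rw [if_pos h]
    have he : X ∩ Y ∩ Finset.range (i + 1) = insert i (X ∩ Y ∩ Finset.range i) := by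
      ext j
      simp only [Finset.mem_inter, Finset.mem_range, Finset.mem_insert]
      constructor
      · rintro ⟨⟨hjX, hjY⟩, hj⟩
        rcases Nat.lt_succ_iff_lt_or_eq.mp hj with hj' | rfl
        · exact Or.inr ⟨⟨hjX, hjY⟩, hj'⟩
        · exact Or.inl rfl
      · rintro (rfl | ⟨⟨hjX, hjY⟩, hj⟩)
        · exact ⟨h, Nat.lt_succ_self _⟩
        · exact ⟨⟨hjX, hjY⟩, hj.trans (Nat.lt_succ_self _)⟩
    rw [he, Finset.card_insert_of_notMem (by simp)]
  · rw [if_neg h, add_zero]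
    congr 1
    ext j
    simp only [Finset.mem_inter, Finset.mem_range]
    constructor
    · rintro ⟨⟨hjX, hjY⟩, hj⟩
      rcases Nat.lt_succ_iff_lt_or_eq.mp hj with hj' | rfl
      · exact ⟨⟨hjX, hjY⟩, hj'⟩
      · exact (h ⟨hjX, hjY⟩).elim
    · rintro ⟨⟨hjX, hjY⟩, hj⟩
      exact ⟨⟨hjX, hjY⟩, hj.trans (Nat.lt_succ_self _)⟩

lemma sweepG_adj_u (H : SimpleGraph V) (u : V) (s t : V → ℕ) (i : ℕ) (z : V) :
    (sweepG H u s t i).Adj u z ↔ (z ≠ u ∧ s z ≤ i ∧ i < t z) := by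
  constructor
  · rintro ⟨hne, (⟨_, h⟩ | ⟨hzu, _⟩ | ⟨huu, _⟩)⟩
    · exact h
    · exact (hne hzu.symm).elim
    · exact (huu rfl).elim
  · rintro ⟨hzu, h⟩
    exact ⟨fun e => hzu e.symm, Or.inl ⟨rfl, hzu, h⟩⟩

lemma sweepG_adj_off (H : SimpleGraph V) (u : V) (s t : V → ℕ) (i : ℕ) (x y : V)
    (hx : x ≠ u) (hy : y ≠ u) :
    (sweepG H u s t i).Adj x y ↔ (x ≠ y ∧ Xor' (H.Adj x y)
      (Odd ((Finset.Ico (s x) (t x) ∩ Finset.Ico (s y) (t y) ∩ Finset.range i).card))) := by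
  constructor
  · rintro ⟨hxy, (⟨e, _⟩ | ⟨e, _⟩ | ⟨_, _, h⟩)⟩
    · exact (hx e).elim
    · exact (hy e).elim
    · exact ⟨hxy, h⟩
  · rintro ⟨hxy, h⟩
    exact ⟨hxy, Or.inr (Or.inr ⟨hx, hy, h⟩)⟩

lemma localComp_adj_u (Q : SimpleGraph V) (u z : V) :
    (localComp Q u).Adj u z ↔ Q.Adj u z := by
  constructor
  · rintro ⟨hne, h⟩
    rwa [if_neg (fun hc => Q.loopless.irrefl u hc.1)] at h
  · intro h
    exact ⟨h.ne, by rwa [if_neg (fun hc => Q.loopless.irrefl u hc.1)]⟩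

lemma sweep_step [Fintype V] (H : SimpleGraph V) (u : V) (s t : V → ℕ) (htu : t u = 0)
    (i : ℕ) :
    toggleSet u (dSet s t i) (localComp (sweepG H u s t i) u) = sweepG H u s t (i + 1) := by
  classical
  set Q := sweepG H u s t i with hQ
  set D := dSet s t i with hD
  have huD : u ∉ D := u_not_mem_dSet s t u htu i
  have ccard : ∀ x y : V,
      (Finset.Ico (s x) (t x) ∩ Finset.Ico (s y) (t y) ∩ Finset.range (i + 1)).card
        = (Finset.Ico (s x) (t x) ∩ Finset.Ico (s y) (t y) ∩ Finset.range i).card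
          + (if (s x ≤ i ∧ i < t x) ∧ (s y ≤ i ∧ i < t y) then 1 else 0) := by
    intro x y
    rw [card_inter_range_succ]
    congr 1
    simp [Finset.mem_Ico]
  -- the u-row of the left-hand side
  have hrow : ∀ z, z ≠ u →
      ((toggleSet u D (localComp Q u)).Adj u z ↔ (z ≠ u ∧ s z ≤ i + 1 ∧ i + 1 < t z)) := by
    intro z hz
    constructor
    · rintro ⟨hne, hXor⟩
      refine ⟨hz, ?_⟩
      have hzD : Xor' ((localComp Q u).Adj u z) (z ∈ D) := by
        rcases hXor with ⟨h1, h2⟩ | ⟨h1, h2⟩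
        · exact Or.inl ⟨h1, fun hm => h2 (Or.inl ⟨rfl, hm⟩)⟩
        · rcases h1 with ⟨_, hm⟩ | ⟨e, _⟩
          · exact Or.inr ⟨hm, h2⟩
          · exact (hz e).elim
      rw [localComp_adj_u, sweepG_adj_u, mem_dSet] at hzD
      unfold Xor' Xor at hzD
      tauto
    · rintro ⟨_, h⟩
      refine ⟨fun e => hz e.symm, ?_⟩
      have hzD : Xor' ((localComp Q u).Adj u z) (z ∈ D) := by
        rw [localComp_adj_u, sweepG_adj_u, mem_dSet]
        unfold Xor' Xor
        tauto
      rcases hzD with ⟨h1, h2⟩ | ⟨h1, h2⟩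
      · exact Or.inl ⟨h1, by rintro (⟨_, hm⟩ | ⟨e, _⟩); exacts [h2 hm, hz e]⟩
      · exact Or.inr ⟨Or.inl ⟨rfl, h1⟩, h2⟩
  -- the off-u part
  have hoff : ∀ x y, x ≠ u → y ≠ u →
      ((toggleSet u D (localComp Q u)).Adj x y ↔ (sweepG H u s t (i + 1)).Adj x y) := by
    intro x y hx hy
    rw [sweepG_adj_off H u s t (i + 1) x y hx hy]
    have hC : ¬ ((x = u ∧ y ∈ D) ∨ (y = u ∧ x ∈ D)) := by
      rintro (⟨e, _⟩ | ⟨e, _⟩)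
      exacts [hx e, hy e]
    constructor
    · rintro ⟨hxy, hXor⟩
      have hLC : (localComp Q u).Adj x y := by
        rcases hXor with ⟨h1, _⟩ | ⟨h1, _⟩
        · exact h1
        · exact (hC h1).elim
      obtain ⟨-, hif⟩ := hLC
      refine ⟨hxy, ?_⟩
      rw [ccard x y]
      by_cases hb : (s x ≤ i ∧ i < t x) ∧ (s y ≤ i ∧ i < t y)
      · rw [if_pos hb]
        rw [if_pos ⟨(sweepG_adj_u H u s t i x).mpr ⟨hx, hb.1⟩,
              (sweepG_adj_u H u s t i y).mpr ⟨hy, hb.2⟩⟩] at hif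
        rw [Nat.odd_add_one]
        have hnot : ¬ Xor' (H.Adj x y)
            (Odd ((Finset.Ico (s x) (t x) ∩ Finset.Ico (s y) (t y) ∩ Finset.range i).card)) := by
          intro hh
          exact hif ((sweepG_adj_off H u s t i x y hx hy).mpr ⟨hxy, hh⟩)
        unfold Xor' Xor at hnot ⊢
        tauto
      · rw [if_neg hb, add_zero]
        rw [if_neg (fun hc => hb ⟨((sweepG_adj_u H u s t i x).mp hc.1).2,
              ((sweepG_adj_u H u s t i y).mp hc.2).2⟩)] at hif
        exact ((sweepG_adj_off H u s t i x y hx hy).mp hif).2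
    · rintro ⟨hxy, h⟩
      rw [ccard x y] at h
      refine ⟨hxy, ?_⟩
      have hgoal : (localComp Q u).Adj x y := by
        refine ⟨hxy, ?_⟩
        by_cases hb : (s x ≤ i ∧ i < t x) ∧ (s y ≤ i ∧ i < t y)
        · rw [if_pos ⟨(sweepG_adj_u H u s t i x).mpr ⟨hx, hb.1⟩,
              (sweepG_adj_u H u s t i y).mpr ⟨hy, hb.2⟩⟩]
          rw [if_pos hb, Nat.odd_add_one] at h
          intro hadj
          have h2 := ((sweepG_adj_off H u s t i x y hx hy).mp hadj).2
          unfold Xor' Xor at h h2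
          tauto
        · rw [if_neg (fun hc => hb ⟨((sweepG_adj_u H u s t i x).mp hc.1).2,
              ((sweepG_adj_u H u s t i y).mp hc.2).2⟩)]
          rw [if_neg hb, add_zero] at h
          exact (sweepG_adj_off H u s t i x y hx hy).mpr ⟨hxy, h⟩
      exact Or.inl ⟨hgoal, hC⟩
  ext x y
  by_cases hx : x = u
  · rw [hx]
    by_cases hy : y = u
    · rw [hy]
      constructor <;> (rintro ⟨hne, _⟩; exact (hne rfl).elim)
    · rw [hrow y hy, sweepG_adj_u]
  · by_cases hy : y = u
    · rw [hy]
      exact ((toggleSet u D (localComp Q u)).adj_comm x u).trans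
        ((hrow x hx).trans ((sweepG_adj_u H u s t (i + 1) x).symm.trans
          ((sweepG H u s t (i + 1)).adj_comm u x)))
    · exact hoff x y hx hy

lemma sweep_chain [Fintype V] (H H' : SimpleGraph V) (u : V) (s t : V → ℕ) (htu : t u = 0) :
    ∀ (d i k : ℕ), CZle (sweepG H u s t (i + d)) H' k →
      CZle (sweepG H u s t i) H' (k + ∑ j ∈ Finset.Ico i (i + d), (dSet s t j).card) := by
  intro d
  induction d with
  | zero => intro i k h; simpa using h
  | succ d ih =>
    intro i k h
    have h1 : CZle (sweepG H u s t (i + 1)) H' (k + ∑ j ∈ Finset.Ico (i + 1) (i + 1 + d), (dSet s t j).card) := by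
      apply ih
      have : i + 1 + d = i + (d + 1) := by ring
      rwa [this]
    have h2 := czle_toggleSet u (dSet s t i) (localComp (sweepG H u s t i) u)
      (u_not_mem_dSet s t u htu i) (by rwa [sweep_step H u s t htu i])
    have h3 := czle_locEquiv_left (locallyEquiv_localComp (sweepG H u s t i) u) h2
    have he : k + ∑ j ∈ Finset.Ico (i + 1) (i + 1 + d), (dSet s t j).card + (dSet s t i).card
        = k + ∑ j ∈ Finset.Ico i (i + (d + 1)), (dSet s t j).card := by
      rw [Finset.sum_eq_sum_Ico_succ_bot (by omega : i < i + (d + 1))]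
      have : i + (d + 1) = i + 1 + d := by ring
      rw [this]
      ring
    rwa [he] at h3

end AuxSweep

section AuxCnt

open Classical in
/-- Twice the number of members of `E` below `x`, plus 2. -/
noncomputable def cntF (E : Finset ℝ) (x : ℝ) : ℕ :=
  2 * (E.filter (fun e => e < x)).card + 2

lemma cntF_even (E : Finset ℝ) (x : ℝ) : cntF E x % 2 = 0 := by
  unfold cntF; omega

lemma cntF_mono (E : Finset ℝ) {p q : ℝ} (h : p ≤ q) : cntF E p ≤ cntF E q := by
  classical
  unfold cntF
  have : E.filter (fun e => e < p) ⊆ E.filter (fun e => e < q) := by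
    intro x hx
    simp only [Finset.mem_filter] at hx ⊢
    exact ⟨hx.1, lt_of_lt_of_le hx.2 h⟩
  have := Finset.card_le_card this
  omega

lemma cntF_jump (E : Finset ℝ) {q p : ℝ} (hq : q ∈ E) (h : q < p) :
    cntF E q + 2 ≤ cntF E p := by
  classical
  unfold cntF
  have hsub : insert q (E.filter (fun e => e < q)) ⊆ E.filter (fun e => e < p) := by
    intro x hx
    simp only [Finset.mem_insert, Finset.mem_filter] at hx ⊢
    rcases hx with rfl | ⟨hx1, hx2⟩
    · exact ⟨hq, h⟩
    · exact ⟨hx1, hx2.trans (lt_of_le_of_lt (le_refl q) h)⟩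
  have hnm : q ∉ E.filter (fun e => e < q) := by
    simp
  have := Finset.card_le_card hsub
  rw [Finset.card_insert_of_notMem hnm] at this
  omega

lemma cntF_le (E : Finset ℝ) (p : ℝ) : cntF E p ≤ 2 * E.card + 2 := by
  classical
  unfold cntF
  have := Finset.card_le_card (Finset.filter_subset (fun e => e < p) E)
  omega

lemma bridge1 (E : Finset ℝ) {p q : ℝ} (hq : q ∈ E) (hne : p ≠ q) :
    p < q ↔ cntF E p < cntF E q + 1 := by
  constructor
  · intro h
    have := cntF_mono E h.le
    omega
  · intro h
    rcases lt_trichotomy p q with h' | h' | h'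
    · exact h'
    · exact (hne h').elim
    · have := cntF_jump E hq h'
      omega

lemma bridge2 (E : Finset ℝ) {p q : ℝ} (hq : q ∈ E) (hne : p ≠ q) :
    q < p ↔ cntF E q + 1 < cntF E p := by
  constructor
  · intro h
    have := cntF_jump E hq h
    omega
  · intro h
    rcases lt_trichotomy p q with h' | h' | h'
    · have := cntF_mono E h'.le
      omega
    · exact (hne h').elim
    · exact h'

lemma even_inter (sa ta sb tb : ℕ) (h1 : sb % 2 = sa % 2) (h2 : ta % 2 = sa % 2)
    (h3 : tb % 2 = sa % 2) :
    ¬ Odd ((Finset.Ico sa ta ∩ Finset.Ico sb tb).card) := by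
  rw [Finset.Ico_inter_Ico, Nat.card_Ico, Nat.odd_iff]
  omega

lemma key_parity (E : Finset ℝ) {la ra lb rb : ℝ} (h1 : la < ra) (h2 : lb < rb)
    (hlbE : lb ∈ E) (hrbE : rb ∈ E) (n1 : la ≠ lb) (n2 : la ≠ rb) (n3 : ra ≠ lb)
    (n4 : ra ≠ rb) :
    (Odd ((Finset.Ico (cntF E la) (cntF E ra)
        ∩ Finset.Ico (cntF E lb + 1) (cntF E rb + 1)).card)
      ↔ ((la < lb ∧ lb < ra ∧ ra < rb) ∨ (lb < la ∧ la < rb ∧ rb < ra))) := by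
  rw [bridge1 E hlbE n1, bridge2 E hlbE n3, bridge1 E hrbE n4, bridge2 E hlbE n1,
    bridge1 E hrbE n2, bridge2 E hrbE n4]
  rw [Finset.Ico_inter_Ico, Nat.card_Ico, Nat.odd_iff]
  have e1 := cntF_even E la
  have e2 := cntF_even E ra
  have e3 := cntF_even E lb
  have e4 := cntF_even E rb
  have m1 : cntF E la ≤ cntF E ra := cntF_mono E h1.le
  have m2 : cntF E lb + 2 ≤ cntF E rb := cntF_jump E hlbE h2
  omega

end AuxCnt

set_option maxHeartbeats 1000000 in
theorem stmt14 [Fintype V] (G : SimpleGraph V) (n : ℕ) (hn : Fintype.card V = n)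
    (h1 : 1 ≤ n) (hG : IsCircleGraph G) (u : V) (hu : G.neighborSet u = ∅)
    (A B : Set V) (hA : u ∉ A) (hB : u ∉ B) (hAB : Disjoint A B)
    (H : SimpleGraph V) (huH : H.neighborSet u = ∅) :
    czDist H (SimpleGraph.fromRel (fun x y =>
      Xor' (H.Adj x y) (G.Adj x y ∧ ((x ∈ A ∧ y ∈ B) ∨ (x ∈ B ∧ y ∈ A)))))
      ≤ 2 * n - 2 := by
  classical
  obtain ⟨l, r, hlr, hinj, hadj⟩ := hG
  set T : SimpleGraph V := SimpleGraph.fromRel (fun x y =>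
      Xor' (H.Adj x y) (G.Adj x y ∧ ((x ∈ A ∧ y ∈ B) ∨ (x ∈ B ∧ y ∈ A)))) with hT
  have hHu : ∀ z, ¬ H.Adj u z := fun z hz =>
    Set.eq_empty_iff_forall_notMem.mp huH z hz
  have hGu : ∀ z, ¬ G.Adj u z := fun z hz =>
    Set.eq_empty_iff_forall_notMem.mp hu z hz
  have hd : ∀ {v : V}, v ∈ A → v ∉ B := fun hv hb => Set.disjoint_left.mp hAB hv hb
  -- endpoint distinctness
  have hll : ∀ {v w : V}, l v = l w → v = w := by
    intro v w h
    have := hinj (a₁ := (v, false)) (a₂ := (w, false)) (by simpa using h)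
    exact (Prod.ext_iff.mp this).1
  have hrr : ∀ {v w : V}, r v = r w → v = w := by
    intro v w h
    have := hinj (a₁ := (v, true)) (a₂ := (w, true)) (by simpa using h)
    exact (Prod.ext_iff.mp this).1
  have hlr' : ∀ (v w : V), l v ≠ r w := by
    intro v w h
    have := hinj (a₁ := (v, false)) (a₂ := (w, true)) (by simpa using h)
    simpa using (Prod.ext_iff.mp this).2
  -- the endpoint set of B
  set Bf : Finset V := (Set.toFinite B).toFinset with hBf
  set E : Finset ℝ := Bf.image l ∪ Bf.image r with hE
  have hlE : ∀ v, v ∈ B → l v ∈ E := fun v hv =>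
    Finset.mem_union_left _ (Finset.mem_image_of_mem l ((Set.Finite.mem_toFinset _).mpr hv))
  have hrE : ∀ v, v ∈ B → r v ∈ E := fun v hv =>
    Finset.mem_union_right _ (Finset.mem_image_of_mem r ((Set.Finite.mem_toFinset _).mpr hv))
  -- activity intervals
  set s : V → ℕ := fun v => if v ∈ A then cntF E (l v) else if v ∈ B then cntF E (l v) + 1 else 0
    with hs
  set t : V → ℕ := fun v => if v ∈ A then cntF E (r v) else if v ∈ B then cntF E (r v) + 1 else 0
    with ht
  set M : ℕ := 2 * E.card + 3 with hM
  have cntF_pos : ∀ x : ℝ, 2 ≤ cntF E x := by intro x; unfold cntF; omega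
  have htu : t u = 0 := by simp only [ht]; rw [if_neg hA, if_neg hB]
  have hsu : s u = 0 := by simp only [hs]; rw [if_neg hA, if_neg hB]
  have hts : ∀ v, t v ≤ M := by
    intro v
    simp only [ht]
    by_cases h' : v ∈ A
    · rw [if_pos h']; have := cntF_le E (r v); omega
    · rw [if_neg h']
      by_cases h'' : v ∈ B
      · rw [if_pos h'']; have := cntF_le E (r v); omega
      · rw [if_neg h'']; omega
  have hst0 : ∀ v, s v = 0 → t v = 0 := by
    intro v hv
    simp only [hs] at hv; simp only [ht]
    by_cases h' : v ∈ A
    · rw [if_pos h'] at hv; have := cntF_pos (l v); omega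
    · rw [if_neg h'] at hv ⊢
      by_cases h'' : v ∈ B
      · rw [if_pos h''] at hv; omega
      · rw [if_neg h'']
  -- the initial graph is H
  have hQ0 : sweepG H u s t 0 = H := by
    ext x y
    constructor
    · rintro ⟨hxy, h | h | h⟩
      · exfalso
        obtain ⟨_, _, hs0, hlt⟩ := h
        have := hst0 y (by omega)
        omega
      · exfalso
        obtain ⟨_, _, hs0, hlt⟩ := h
        have := hst0 x (by omega)
        omega
      · obtain ⟨_, _, hXor⟩ := h
        rcases hXor with ⟨hp, _⟩ | ⟨ho, _⟩
        · exact hp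
        · simp at ho
    · intro h
      have hx : x ≠ u := fun e => hHu y (e ▸ h)
      have hy : y ≠ u := fun e => hHu x (e ▸ h.symm)
      exact ⟨h.ne, Or.inr (Or.inr ⟨hx, hy, Or.inl ⟨h, by simp⟩⟩)⟩
  -- the final graph is the target T
  have hcore : ∀ x y : V, x ≠ y →
      (Odd ((Finset.Ico (s x) (t x) ∩ Finset.Ico (s y) (t y) ∩ Finset.range M).card)
        ↔ (G.Adj x y ∧ ((x ∈ A ∧ y ∈ B) ∨ (x ∈ B ∧ y ∈ A)))) := by
    intro x y hxy
    have hdrop : Finset.Ico (s x) (t x) ∩ Finset.Ico (s y) (t y) ∩ Finset.range M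
        = Finset.Ico (s x) (t x) ∩ Finset.Ico (s y) (t y) := by
      ext j
      simp only [Finset.mem_inter, Finset.mem_Ico, Finset.mem_range]
      constructor
      · tauto
      · rintro ⟨hx', hy'⟩
        exact ⟨⟨hx', hy'⟩, lt_of_lt_of_le hx'.2 (hts x)⟩
    rw [hdrop]
    have hsA : ∀ v, v ∈ A → s v = cntF E (l v) := by
      intro v hv; simp only [hs]; rw [if_pos hv]
    have htA : ∀ v, v ∈ A → t v = cntF E (r v) := by
      intro v hv; simp only [ht]; rw [if_pos hv]
    have hsB : ∀ v, v ∈ B → s v = cntF E (l v) + 1 := by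
      intro v hv; simp only [hs]
      rw [if_neg (fun h' => hd h' hv), if_pos hv]
    have htB : ∀ v, v ∈ B → t v = cntF E (r v) + 1 := by
      intro v hv; simp only [ht]
      rw [if_neg (fun h' => hd h' hv), if_pos hv]
    have hs0 : ∀ v, v ∉ A → v ∉ B → s v = 0 := by
      intro v h' h''; simp only [hs]; rw [if_neg h', if_neg h'']
    have ht0 : ∀ v, v ∉ A → v ∉ B → t v = 0 := by
      intro v h' h''; simp only [ht]; rw [if_neg h', if_neg h'']
    by_cases hxA : x ∈ A
    · by_cases hyA : y ∈ A
      · refine iff_of_false ?_ ?_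
        · rw [hsA x hxA, htA x hxA, hsA y hyA, htA y hyA]
          exact even_inter _ _ _ _
            (by have := cntF_even E (l y); have := cntF_even E (l x); omega)
            (by have := cntF_even E (r x); have := cntF_even E (l x); omega)
            (by have := cntF_even E (r y); have := cntF_even E (l x); omega)
        · rintro ⟨_, ⟨_, h2⟩ | ⟨h1, _⟩⟩
          · exact hd hyA h2
          · exact hd hxA h1
      · by_cases hyB : y ∈ B
        · -- x ∈ A, y ∈ B
          rw [hsA x hxA, htA x hxA, hsB y hyB, htB y hyB]
          rw [key_parity E (hlr x) (hlr y) (hlE y hyB) (hrE y hyB)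
            (fun h => hxy (hll h)) (hlr' x y) (fun h => (hlr' y x) h.symm)
            (fun h => hxy (hrr h))]
          rw [hadj x y]
          exact ⟨fun h => ⟨h, Or.inl ⟨hxA, hyB⟩⟩, fun h => h.1⟩
        · refine iff_of_false ?_ ?_
          · rw [hs0 y hyA hyB, ht0 y hyA hyB]
            simp
          · rintro ⟨_, ⟨_, h2⟩ | ⟨_, h2⟩⟩
            · exact hyB h2
            · exact hyA h2
    · by_cases hxB : x ∈ B
      · by_cases hyA : y ∈ A
        · -- x ∈ B, y ∈ A
          rw [Finset.inter_comm (Finset.Ico (s x) (t x)) (Finset.Ico (s y) (t y))]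
          rw [hsA y hyA, htA y hyA, hsB x hxB, htB x hxB]
          rw [key_parity E (hlr y) (hlr x) (hlE x hxB) (hrE x hxB)
            (fun h => hxy (hll h.symm)) (hlr' y x) (fun h => (hlr' x y) h.symm)
            (fun h => hxy (hrr h.symm))]
          rw [G.adj_comm x y, hadj y x]
          exact ⟨fun h => ⟨h, Or.inr ⟨hxB, hyA⟩⟩, fun h => h.1⟩
        · by_cases hyB : y ∈ B
          · refine iff_of_false ?_ ?_
            · rw [hsB x hxB, htB x hxB, hsB y hyB, htB y hyB]
              exact even_inter _ _ _ _
                (by have := cntF_even E (l y); have := cntF_even E (l x); omega)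
                (by have := cntF_even E (r x); have := cntF_even E (l x); omega)
                (by have := cntF_even E (r y); have := cntF_even E (l x); omega)
            · rintro ⟨_, ⟨h1, _⟩ | ⟨_, h2⟩⟩
              · exact hxA h1
              · exact hyA h2
          · refine iff_of_false ?_ ?_
            · rw [hs0 y hyA hyB, ht0 y hyA hyB]
              simp
            · rintro ⟨_, ⟨_, h2⟩ | ⟨_, h2⟩⟩
              · exact hyB h2
              · exact hyA h2
      · refine iff_of_false ?_ ?_
        · rw [hs0 x hxA hxB, ht0 x hxA hxB]
          simp
        · rintro ⟨_, ⟨h1, _⟩ | ⟨h1, _⟩⟩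
          · exact hxA h1
          · exact hxB h1
  have hQM : sweepG H u s t M = T := by
    ext x y
    rw [hT, SimpleGraph.fromRel_adj]
    have hPsym : (Xor' (H.Adj y x) (G.Adj y x ∧ ((y ∈ A ∧ x ∈ B) ∨ (y ∈ B ∧ x ∈ A))))
        ↔ (Xor' (H.Adj x y) (G.Adj x y ∧ ((x ∈ A ∧ y ∈ B) ∨ (x ∈ B ∧ y ∈ A)))) := by
      rw [H.adj_comm y x, G.adj_comm y x]
      unfold Xor' Xor
      tauto
    constructor
    · rintro ⟨hxy, h | h | h⟩
      · exfalso
        obtain ⟨_, _, _, hlt⟩ := h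
        have := hts y
        omega
      · exfalso
        obtain ⟨_, _, _, hlt⟩ := h
        have := hts x
        omega
      · obtain ⟨hx, hy, hXor⟩ := h
        refine ⟨hxy, Or.inl ?_⟩
        have hiff := hcore x y hxy
        rcases hXor with ⟨hp, hno⟩ | ⟨ho, hnp⟩
        · exact Or.inl ⟨hp, fun hc => hno (hiff.mpr hc)⟩
        · exact Or.inr ⟨hiff.mp ho, hnp⟩
    · rintro ⟨hxy, hP⟩
      have hP' : Xor' (H.Adj x y) (G.Adj x y ∧ ((x ∈ A ∧ y ∈ B) ∨ (x ∈ B ∧ y ∈ A))) := by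
        rcases hP with h | h
        · exact h
        · exact hPsym.mp h
      have hx : x ≠ u := by
        rintro rfl
        rcases hP' with ⟨hp, _⟩ | ⟨⟨hg, _⟩, _⟩
        · exact hHu y hp
        · exact hGu y hg
      have hy : y ≠ u := by
        rintro rfl
        rcases hP' with ⟨hp, _⟩ | ⟨⟨hg, _⟩, _⟩
        · exact hHu x hp.symm
        · exact hGu x hg.symm
      refine ⟨hxy, Or.inr (Or.inr ⟨hx, hy, ?_⟩)⟩
      have hiff := hcore x y hxy
      rcases hP' with ⟨hp, hno⟩ | ⟨hr, hnp⟩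
      · exact Or.inl ⟨hp, fun ho => hno (hiff.mp ho)⟩
      · exact Or.inr ⟨hiff.mpr hr, hnp⟩
  -- the chain
  have hbase : CZle (sweepG H u s t (0 + M)) T 0 := by
    rw [Nat.zero_add, hQM]
    exact CZle.base Relation.ReflTransGen.refl
  have hchain := sweep_chain H T u s t htu M 0 0 hbase
  rw [hQ0] at hchain
  -- cost bound
  have hsum : 0 + ∑ j ∈ Finset.Ico 0 (0 + M), (dSet s t j).card ≤ 2 * n - 2 := by
    have hswap : ∑ j ∈ Finset.Ico 0 (0 + M), (dSet s t j).card
        = ∑ v ∈ Finset.univ, ((Finset.Ico 0 (0 + M)).filter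
            (fun j => ¬((s v ≤ j ∧ j < t v) ↔ (s v ≤ j + 1 ∧ j + 1 < t v)))).card := by
      calc ∑ j ∈ Finset.Ico 0 (0 + M), (dSet s t j).card
          = ∑ j ∈ Finset.Ico 0 (0 + M), ∑ v ∈ Finset.univ,
              (if ¬((s v ≤ j ∧ j < t v) ↔ (s v ≤ j + 1 ∧ j + 1 < t v)) then 1 else 0) := by
            refine Finset.sum_congr rfl fun j _ => ?_
            simp only [dSet]
            rw [Finset.card_filter]
        _ = ∑ v ∈ Finset.univ, ∑ j ∈ Finset.Ico 0 (0 + M),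
              (if ¬((s v ≤ j ∧ j < t v) ↔ (s v ≤ j + 1 ∧ j + 1 < t v)) then 1 else 0) :=
            Finset.sum_comm
        _ = _ := by
            refine Finset.sum_congr rfl fun v _ => ?_
            rw [Finset.card_filter]
    rw [hswap]
    have hv2 : ∀ v : V, ((Finset.Ico 0 (0 + M)).filter
        (fun j => ¬((s v ≤ j ∧ j < t v) ↔ (s v ≤ j + 1 ∧ j + 1 < t v)))).card ≤ 2 := by
      intro v
      have hsub : (Finset.Ico 0 (0 + M)).filter
          (fun j => ¬((s v ≤ j ∧ j < t v) ↔ (s v ≤ j + 1 ∧ j + 1 < t v)))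
          ⊆ {s v - 1, t v - 1} := by
        intro j hj
        simp only [Finset.mem_filter, Finset.mem_Ico, Finset.mem_insert,
          Finset.mem_singleton] at hj ⊢
        omega
      refine le_trans (Finset.card_le_card hsub) ?_
      refine le_trans (Finset.card_insert_le _ _) ?_
      simp
    have hvu : ((Finset.Ico 0 (0 + M)).filter
        (fun j => ¬((s u ≤ j ∧ j < t u) ↔ (s u ≤ j + 1 ∧ j + 1 < t u)))).card = 0 := by
      rw [Finset.card_eq_zero, Finset.filter_eq_empty_iff]
      intro j _
      rw [htu, hsu]
      omega
    calc 0 + ∑ v ∈ Finset.univ, ((Finset.Ico 0 (0 + M)).filter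
            (fun j => ¬((s v ≤ j ∧ j < t v) ↔ (s v ≤ j + 1 ∧ j + 1 < t v)))).card
        = ((Finset.Ico 0 (0 + M)).filter
            (fun j => ¬((s u ≤ j ∧ j < t u) ↔ (s u ≤ j + 1 ∧ j + 1 < t u)))).card
          + ∑ v ∈ Finset.univ.erase u, ((Finset.Ico 0 (0 + M)).filter
            (fun j => ¬((s v ≤ j ∧ j < t v) ↔ (s v ≤ j + 1 ∧ j + 1 < t v)))).card := by
          rw [Nat.zero_add]
          exact (Finset.add_sum_erase _ _ (Finset.mem_univ u)).symm
      _ ≤ 0 + (n - 1) * 2 := by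
          refine Nat.add_le_add (le_of_eq hvu) ?_
          refine le_trans (Finset.sum_le_card_nsmul _ _ 2 (fun v _ => hv2 v)) ?_
          rw [Finset.card_erase_of_mem (Finset.mem_univ u), Finset.card_univ, hn,
            smul_eq_mul]
      _ ≤ 2 * n - 2 := by omega
  exact le_trans (Nat.sInf_le hchain) hsum
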